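/- For α = 1 and t > 0, the integral I₁(t) = ∫₀^∞ (e^{itx} − 1 − itx/(1+x²)) x^{−2} dx equals i c t − (π/2) t − i t log t for some real constant c. -/

import Mathlib

open MeasureTheory Set Complex Real Filter Topology

lemma integrableOn_exp_mul_one_sub_cos {s : ℝ} (hs : 0 < s) :
    IntegrableOn (fun u => Real.exp (-(s*u)) * (1 - Real.cos u)) (Ioi (0:ℝ)) := by
  apply Integrable.mono' (((exp_neg_integrableOn_Ioi 0 hs)).const_mul 2)
  · exact (((Real.continuous_exp.comp (continuous_const.mul continuous_id).neg).mul
      (continuous_const.sub Real.continuous_cos))).aestronglyMeasurable.restrict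
  · filter_upwards with u
    rw [Real.norm_eq_abs, abs_mul, abs_of_pos (Real.exp_pos _)]
    have h1 : |1 - Real.cos u| ≤ 2 := by
      have := Real.neg_one_le_cos u
      have := Real.cos_le_one u
      rw [abs_le]; constructor <;> linarith
    rw [neg_mul]
    nlinarith [Real.exp_pos (-(s*u)), mul_le_mul_of_nonneg_left h1 (Real.exp_pos (-(s*u))).le]

lemma laplace_one_sub_cos {s : ℝ} (hs : 0 < s) :
    ∫ u in Ioi (0:ℝ), Real.exp (-(s*u)) * (1 - Real.cos u) = (s * (1 + s^2))⁻¹ := by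
  have h2 : (1:ℝ) + s^2 ≠ 0 := by positivity
  set F : ℝ → ℝ := fun u => -Real.exp (-(s*u))/s
      - Real.exp (-(s*u)) * (Real.sin u - s * Real.cos u)/(1+s^2) with hF
  have hderiv : ∀ u ∈ Ici (0:ℝ), HasDerivAt F (Real.exp (-(s*u)) * (1 - Real.cos u)) u := by
    intro u _
    have he : HasDerivAt (fun u : ℝ => Real.exp (-(s*u))) (-s * Real.exp (-(s*u))) u := by
      have h : HasDerivAt (fun u : ℝ => -(s*u)) (-s) u := by
        simpa using ((hasDerivAt_id u).const_mul s).fun_neg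
      simpa [mul_comm] using h.exp
    have h1 : HasDerivAt (fun u : ℝ => -Real.exp (-(s*u))/s) (Real.exp (-(s*u))) u := by
      have := (he.fun_neg).div_const s
      refine this.congr_deriv ?_
      field_simp
    have hsin : HasDerivAt (fun u : ℝ => Real.sin u - s * Real.cos u)
        (Real.cos u + s * Real.sin u) u := by
      simpa [mul_comm] using (Real.hasDerivAt_sin u).fun_sub ((Real.hasDerivAt_cos u).const_mul s)
    have hd2 : HasDerivAt (fun u : ℝ => Real.exp (-(s*u)) * (Real.sin u - s * Real.cos u)/(1+s^2))
        (Real.exp (-(s*u)) * Real.cos u) u := by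
      have := ((he.fun_mul hsin)).div_const (1+s^2)
      refine this.congr_deriv ?_
      field_simp
      ring
    simpa [mul_one_sub] using h1.fun_sub hd2
  have htend : Tendsto F atTop (𝓝 0) := by
    have hexp : Tendsto (fun u : ℝ => Real.exp (-(s*u))) atTop (𝓝 0) := by
      have h : Tendsto (fun u : ℝ => s*u) atTop atTop :=
        Tendsto.const_mul_atTop hs tendsto_id
      exact Real.tendsto_exp_neg_atTop_nhds_zero.comp h
    apply squeeze_zero_norm (a := fun u => (1/s + (1+s)/(1+s^2)) * Real.exp (-(s*u)))
    · intro u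
      rw [hF, Real.norm_eq_abs]
      have hb : |Real.sin u - s * Real.cos u| ≤ 1 + s := by
        have h3 : |s * Real.cos u| ≤ s := by
          rw [abs_mul, abs_of_pos hs]
          nlinarith [Real.abs_cos_le_one u]
        calc |Real.sin u - s * Real.cos u| ≤ |Real.sin u| + |s * Real.cos u| := abs_sub _ _
          _ ≤ 1 + s := add_le_add (Real.abs_sin_le_one u) h3
      have h12 : (0:ℝ) < 1 + s^2 := by positivity
      calc |(-Real.exp (-(s*u))/s - Real.exp (-(s*u)) * (Real.sin u - s * Real.cos u)/(1+s^2))|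
          ≤ |(-Real.exp (-(s*u))/s)| + |Real.exp (-(s*u)) * (Real.sin u - s * Real.cos u)/(1+s^2)| :=
            abs_sub _ _
        _ ≤ Real.exp (-(s*u)) / s + Real.exp (-(s*u)) * (1+s) / (1+s^2) := by
            rw [abs_div, abs_div, abs_neg, abs_of_pos (Real.exp_pos _), abs_of_pos hs,
              abs_of_pos h12, abs_mul, abs_of_pos (Real.exp_pos _)]
            gcongr
        _ = (1/s + (1+s)/(1+s^2)) * Real.exp (-(s*u)) := by ring
    · simpa using hexp.const_mul (1/s + (1+s)/(1+s^2))
  have key := integral_Ioi_of_hasDerivAt_of_tendsto' hderiv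
    (integrableOn_exp_mul_one_sub_cos hs) htend
  rw [key, hF]
  simp only [mul_zero, neg_zero, Real.exp_zero, Real.sin_zero, Real.cos_zero]
  have h1 : s ≠ 0 := hs.ne'
  field_simp
  ring
lemma integral_mul_exp_neg_mul {u : ℝ} (hu : 0 < u) :
    ∫ s in Ioi (0:ℝ), s * Real.exp (-(u*s)) = (u^2)⁻¹ := by
  calc ∫ s in Ioi (0:ℝ), s * Real.exp (-(u*s))
      = ∫ t in Ioi (0:ℝ), t ^ ((2:ℝ) - 1) * Real.exp (-(u*t)) := by
        refine setIntegral_congr_fun measurableSet_Ioi (fun s hs => ?_)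
        rw [show (2:ℝ) - 1 = 1 by norm_num, Real.rpow_one]
    _ = (1/u) ^ (2:ℝ) * Real.Gamma 2 := Real.integral_rpow_mul_exp_neg_mul_Ioi two_pos hu
    _ = (u^2)⁻¹ := by
        rw [Real.Gamma_two, mul_one, show (2:ℝ) = ((2:ℕ):ℝ) by norm_num,
          Real.rpow_natCast, one_div, inv_pow]
lemma integral_one_sub_cos_div_sq :
    ∫ u in Ioi (0:ℝ), (1 - Real.cos u) * (u^2)⁻¹ = π/2 := by
  set μ := volume.restrict (Ioi (0:ℝ)) with hμ
  set f : ℝ → ℝ → ℝ := fun s u => s * Real.exp (-(s*u)) * (1 - Real.cos u) with hf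
  have hcont : Continuous (Function.uncurry f) := by
    apply Continuous.mul
    · exact (continuous_fst.mul ((continuous_fst.mul continuous_snd).neg.rexp))
    · exact continuous_const.sub (Real.continuous_cos.comp continuous_snd)
  have hnn : ∀ s u : ℝ, 0 < s → 0 ≤ f s u := by
    intro s u hs
    have h1 : 0 ≤ 1 - Real.cos u := by linarith [Real.cos_le_one u]
    exact mul_nonneg (mul_nonneg hs.le (Real.exp_pos _).le) h1
  have hinner : ∀ s : ℝ, 0 < s → ∫ u, f s u ∂μ = (1+s^2)⁻¹ := by
    intro s hs
    rw [hf]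
    simp only
    rw [hμ]
    calc ∫ u in Ioi (0:ℝ), s * Real.exp (-(s*u)) * (1 - Real.cos u)
        = ∫ u in Ioi (0:ℝ), s * (Real.exp (-(s*u)) * (1 - Real.cos u)) := by
          simp only [mul_assoc]
      _ = s * ∫ u in Ioi (0:ℝ), Real.exp (-(s*u)) * (1 - Real.cos u) := integral_const_mul _ _
      _ = s * (s * (1 + s^2))⁻¹ := by rw [laplace_one_sub_cos hs]
      _ = (1+s^2)⁻¹ := by
          field_simp
  have hintf : Integrable (Function.uncurry f) (μ.prod μ) := by
    rw [integrable_prod_iff hcont.aestronglyMeasurable]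
    constructor
    · rw [hμ, ae_restrict_iff' measurableSet_Ioi]
      filter_upwards with s hs
      have := (integrableOn_exp_mul_one_sub_cos hs).const_mul s
      simpa [hf, mul_assoc] using this
    · apply Integrable.congr (g := fun s => ∫ u, ‖f s u‖ ∂μ)
        (integrable_inv_one_add_sq.integrableOn)
      rw [hμ, Filter.EventuallyEq, ae_restrict_iff' measurableSet_Ioi]
      filter_upwards with s hs
      have : ∀ u, ‖f s u‖ = f s u := fun u => Real.norm_of_nonneg (hnn s u hs)
      simp only [this]
      exact (hinner s hs).symm
  have hswap := integral_integral_swap hintf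
  have hLHS : ∫ s, ∫ u, f s u ∂μ ∂μ = π/2 := by
    rw [show ∫ s, ∫ u, f s u ∂μ ∂μ = ∫ s in Ioi (0:ℝ), ∫ u, f s u ∂μ from rfl]
    rw [setIntegral_congr_fun measurableSet_Ioi (fun s hs => hinner s hs)]
    rw [integral_Ioi_inv_one_add_sq]
    simp [Real.arctan_zero]
  have hRHS : ∫ u, ∫ s, f s u ∂μ ∂μ = ∫ u in Ioi (0:ℝ), (1 - Real.cos u) * (u^2)⁻¹ := by
    rw [show ∫ u, ∫ s, f s u ∂μ ∂μ = ∫ u in Ioi (0:ℝ), ∫ s, f s u ∂μ from rfl]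
    refine setIntegral_congr_fun measurableSet_Ioi (fun u hu => ?_)
    rw [hμ]
    calc ∫ s in Ioi (0:ℝ), f s u
        = (∫ s in Ioi (0:ℝ), s * Real.exp (-(u*s))) * (1 - Real.cos u) := by
          rw [← integral_mul_const]
          refine setIntegral_congr_fun measurableSet_Ioi (fun s hs => ?_)
          rw [hf]; simp only; ring_nf
      _ = (1 - Real.cos u) * (u^2)⁻¹ := by rw [integral_mul_exp_neg_mul hu]; ring
  rw [← hRHS, ← hswap, hLHS]
lemma integrableOn_h {t : ℝ} (ht : 0 < t) :
    IntegrableOn (fun u => u/(t^2+u^2) - u/(1+u^2)) (Ioi (0:ℝ)) := by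
  have hd1 : ∀ u : ℝ, (0:ℝ) < t^2 + u^2 := fun u => by positivity
  have hd2 : ∀ u : ℝ, (0:ℝ) < 1 + u^2 := fun u => by positivity
  apply Integrable.mono' ((integrable_inv_one_add_sq.integrableOn).const_mul (|1-t^2|/(2*t)))
  · apply ContinuousOn.aestronglyMeasurable _ measurableSet_Ioi
    apply ContinuousOn.sub
    · exact (continuousOn_id.div (continuous_const.add (continuous_pow 2)).continuousOn
        (fun u _ => (hd1 u).ne'))
    · exact (continuousOn_id.div (continuous_const.add (continuous_pow 2)).continuousOn
        (fun u _ => (hd2 u).ne'))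
  · rw [ae_restrict_iff' measurableSet_Ioi]
    filter_upwards with u hu
    have hu0 : (0:ℝ) < u := hu
    have heq : u/(t^2+u^2) - u/(1+u^2) = (1-t^2) * (u/((t^2+u^2)*(1+u^2))) := by
      field_simp
      ring
    rw [Real.norm_eq_abs, heq, abs_mul]
    have key : u/((t^2+u^2)*(1+u^2)) ≤ (1/(2*t)) * (1+u^2)⁻¹ := by
      have h1 : u/(t^2+u^2) ≤ 1/(2*t) := by
        rw [div_le_div_iff₀ (hd1 u) (by positivity)]
        nlinarith [sq_nonneg (t - u)]
      calc u/((t^2+u^2)*(1+u^2)) = (u/(t^2+u^2)) * (1+u^2)⁻¹ := by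
            rw [div_mul_eq_div_div, div_eq_mul_inv]
        _ ≤ (1/(2*t)) * (1+u^2)⁻¹ := by
            exact mul_le_mul_of_nonneg_right h1 (by positivity)
    have habs : |u/((t^2+u^2)*(1+u^2))| = u/((t^2+u^2)*(1+u^2)) := by
      rw [_root_.abs_of_nonneg]; positivity
    rw [habs]
    calc |1-t^2| * (u/((t^2+u^2)*(1+u^2))) ≤ |1-t^2| * ((1/(2*t)) * (1+u^2)⁻¹) :=
          mul_le_mul_of_nonneg_left key (abs_nonneg _)
      _ = |1-t^2|/(2*t) * (1+u^2)⁻¹ := by ring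

lemma integral_h {t : ℝ} (ht : 0 < t) :
    ∫ u in Ioi (0:ℝ), (u/(t^2+u^2) - u/(1+u^2)) = - Real.log t := by
  have hd1 : ∀ u : ℝ, (0:ℝ) < t^2 + u^2 := fun u => by positivity
  have hd2 : ∀ u : ℝ, (0:ℝ) < 1 + u^2 := fun u => by positivity
  set G : ℝ → ℝ := fun u => (Real.log (t^2+u^2) - Real.log (1+u^2))/2 with hG
  have hderiv : ∀ u ∈ Ici (0:ℝ), HasDerivAt G (u/(t^2+u^2) - u/(1+u^2)) u := by
    intro u _
    have hp : HasDerivAt (fun u : ℝ => t^2 + u^2) (2*u) u := by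
      simpa using (hasDerivAt_pow 2 u).const_add (t^2)
    have hq : HasDerivAt (fun u : ℝ => 1 + u^2) (2*u) u := by
      simpa using (hasDerivAt_pow 2 u).const_add (1:ℝ)
    have h1 := (hp.log (hd1 u).ne').fun_sub (hq.log (hd2 u).ne')
    have h2 := h1.div_const 2
    refine h2.congr_deriv ?_
    field_simp
  have htend : Tendsto G atTop (𝓝 0) := by
    have h1 : Tendsto (fun u : ℝ => (t^2+u^2)/(1+u^2)) atTop (𝓝 1) := by
      have heq : ∀ u : ℝ, (t^2+u^2)/(1+u^2) = 1 + (t^2-1) * (1+u^2)⁻¹ := by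
        intro u; field_simp; ring
      simp only [heq]
      have h2 : Tendsto (fun u : ℝ => (1+u^2)) atTop atTop :=
        tendsto_atTop_add_const_left _ _ (tendsto_pow_atTop two_ne_zero)
      have h3 := (h2.inv_tendsto_atTop).const_mul (t^2-1)
      simpa using (tendsto_const_nhds.add h3)
    have h4 : Tendsto (fun u : ℝ => Real.log ((t^2+u^2)/(1+u^2))) atTop (𝓝 0) := by
      have := (Real.continuousAt_log one_ne_zero).tendsto.comp h1
      simpa [Function.comp_def] using this
    have h5 : ∀ u : ℝ, Real.log ((t^2+u^2)/(1+u^2)) = Real.log (t^2+u^2) - Real.log (1+u^2) :=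
      fun u => Real.log_div (hd1 u).ne' (hd2 u).ne'
    simp only [h5] at h4
    have := h4.div_const 2
    simpa [hG] using this
  have key := integral_Ioi_of_hasDerivAt_of_tendsto' hderiv (integrableOn_h ht) htend
  rw [key, hG]
  simp only [ne_eq, OfNat.ofNat_ne_zero, not_false_eq_true, zero_pow, add_zero, Real.log_one]
  rw [Real.log_pow]
  push_cast
  ring
noncomputable def F1 : ℝ → ℂ := fun x =>
  (Complex.exp (Complex.I * x) - 1 - Complex.I * x / (1 + (x:ℂ)^2)) * ((x ^ (-2:ℝ) : ℝ) : ℂ)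

lemma oneAddSq_ne {x : ℝ} : (1 + (x:ℂ)^2) ≠ 0 := by
  have : (1 + (x:ℂ)^2) = ((1 + x^2 : ℝ) : ℂ) := by push_cast; ring
  rw [this]
  exact_mod_cast (show (1:ℝ) + x^2 ≠ 0 by positivity)

lemma norm_oneAddSq {x : ℝ} : ‖(1 + (x:ℂ)^2)‖ = 1 + x^2 := by
  have h : (1 + (x:ℂ)^2) = ((1 + x^2 : ℝ) : ℂ) := by push_cast; ring
  rw [h, Complex.norm_real, Real.norm_eq_abs, _root_.abs_of_nonneg (by positivity)]

lemma rpow_neg_two_eq {x : ℝ} (hx : 0 ≤ x) : x ^ (-2:ℝ) = (x^2)⁻¹ := by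
  rw [show (-2:ℝ) = -((2:ℕ):ℝ) by norm_num, Real.rpow_neg hx, Real.rpow_natCast]

lemma continuousOn_F1 : ContinuousOn F1 (Ioi (0:ℝ)) := by
  apply ContinuousOn.mul
  · apply ContinuousOn.sub
    · apply ContinuousOn.sub
      · exact (Complex.continuous_exp.comp
          (continuous_const.mul Complex.continuous_ofReal)).continuousOn
      · exact continuousOn_const
    · exact ContinuousOn.div
        ((continuous_const.mul Complex.continuous_ofReal)).continuousOn
        (continuous_const.add (Complex.continuous_ofReal.pow 2)).continuousOn
        (fun x _ => oneAddSq_ne)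
  · exact Complex.continuous_ofReal.comp_continuousOn
      (continuousOn_id.rpow_const (fun x hx => Or.inl (ne_of_gt hx)))

lemma norm_F1_Ioc {x : ℝ} (hx : x ∈ Ioc (0:ℝ) 1) : ‖F1 x‖ ≤ 2 := by
  obtain ⟨hx0, hx1⟩ := hx
  have hA : ‖Complex.exp (Complex.I * x) - 1 - Complex.I * x‖ ≤ x^2 := by
    have h2 : ‖Complex.I * x‖ = x := by
      rw [norm_mul, Complex.norm_I, one_mul, Complex.norm_real, Real.norm_eq_abs, _root_.abs_of_pos hx0]
    have h1 : ‖Complex.I * x‖ ≤ 1 := by rw [h2]; exact hx1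
    have := Complex.norm_exp_sub_one_sub_id_le h1
    calc ‖Complex.exp (Complex.I * x) - 1 - Complex.I * x‖
        ≤ ‖Complex.I * (x:ℂ)‖^2 := this
      _ = x^2 := by rw [h2]
  have hB : ‖Complex.I * x - Complex.I * x / (1 + (x:ℂ)^2)‖ ≤ x^2 := by
    have heq : Complex.I * x - Complex.I * x / (1 + (x:ℂ)^2)
        = Complex.I * x * (x:ℂ)^2 / (1 + (x:ℂ)^2) := by
      field_simp [oneAddSq_ne]
      ring
    rw [heq, norm_div, norm_mul, norm_mul, Complex.norm_I, one_mul, norm_pow,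
      Complex.norm_real, Real.norm_eq_abs, _root_.abs_of_pos hx0, norm_oneAddSq]
    rw [div_le_iff₀ (by positivity)]
    nlinarith
  have hnum : ‖Complex.exp (Complex.I * x) - 1 - Complex.I * x / (1 + (x:ℂ)^2)‖ ≤ 2 * x^2 := by
    have heq : Complex.exp (Complex.I * x) - 1 - Complex.I * x / (1 + (x:ℂ)^2)
        = (Complex.exp (Complex.I * x) - 1 - Complex.I * x)
          + (Complex.I * x - Complex.I * x / (1 + (x:ℂ)^2)) := by ring
    rw [heq]
    calc ‖_ + _‖ ≤ _ := norm_add_le _ _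
      _ ≤ 2 * x^2 := by linarith
  unfold F1
  rw [norm_mul, Complex.norm_real, Real.norm_eq_abs,
    _root_.abs_of_nonneg (Real.rpow_nonneg hx0.le _), rpow_neg_two_eq hx0.le]
  calc ‖_‖ * (x^2)⁻¹ ≤ (2*x^2) * (x^2)⁻¹ :=
        mul_le_mul_of_nonneg_right hnum (by positivity)
    _ = 2 := by field_simp

lemma norm_F1_Ioi {x : ℝ} (hx : 1 < x) : ‖F1 x‖ ≤ 3 * x ^ (-2:ℝ) := by
  have hx0 : (0:ℝ) < x := lt_trans one_pos hx
  have hnum : ‖Complex.exp (Complex.I * x) - 1 - Complex.I * x / (1 + (x:ℂ)^2)‖ ≤ 3 := by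
    have h1 : ‖Complex.exp (Complex.I * x)‖ = 1 := by
      rw [Complex.norm_exp]
      simp
    have h2 : ‖Complex.I * x / (1 + (x:ℂ)^2)‖ ≤ 1 := by
      rw [norm_div, norm_mul, Complex.norm_I, one_mul, Complex.norm_real, Real.norm_eq_abs,
        _root_.abs_of_pos hx0, norm_oneAddSq, div_le_one (by positivity)]
      nlinarith
    calc ‖Complex.exp (Complex.I * x) - 1 - Complex.I * x / (1 + (x:ℂ)^2)‖
        ≤ ‖Complex.exp (Complex.I * x) - 1‖ + ‖Complex.I * x / (1 + (x:ℂ)^2)‖ := norm_sub_le _ _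
      _ ≤ (‖Complex.exp (Complex.I * x)‖ + ‖(1:ℂ)‖) + 1 := by
          have := norm_sub_le (Complex.exp (Complex.I * x)) 1
          linarith
      _ ≤ 3 := by rw [h1, norm_one]; norm_num
  unfold F1
  rw [norm_mul, Complex.norm_real, Real.norm_eq_abs,
    _root_.abs_of_nonneg (Real.rpow_nonneg hx0.le _)]
  exact mul_le_mul_of_nonneg_right hnum (Real.rpow_nonneg hx0.le _)

lemma integrableOn_F1 : IntegrableOn F1 (Ioi (0:ℝ)) := by
  rw [← Ioc_union_Ioi_eq_Ioi (zero_le_one (α := ℝ))]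
  apply IntegrableOn.union
  · apply Integrable.mono' (g := fun _ => (2:ℝ))
      (integrableOn_const measure_Ioc_lt_top.ne)
    · exact (continuousOn_F1.mono (fun x hx => hx.1)).aestronglyMeasurable measurableSet_Ioc
    · rw [ae_restrict_iff' measurableSet_Ioc]
      filter_upwards with x hx
      exact norm_F1_Ioc hx
  · apply Integrable.mono' ((integrableOn_Ioi_rpow_of_lt (by norm_num : (-2:ℝ) < -1)
      one_pos).const_mul 3)
    · exact (continuousOn_F1.mono (fun x (hx : x ∈ Ioi (1:ℝ)) => (lt_trans one_pos hx : (0:ℝ) < x))).aestronglyMeasurable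
        measurableSet_Ioi
    · rw [ae_restrict_iff' measurableSet_Ioi]
      filter_upwards with x hx
      exact norm_F1_Ioi hx

lemma F1_re {u : ℝ} (hu : 0 < u) : (F1 u).re = -((1 - Real.cos u) * (u^2)⁻¹) := by
  unfold F1
  have h : Complex.I * u / (1 + (u:ℂ)^2) = ((u / (1+u^2) : ℝ) : ℂ) * Complex.I := by
    have h2 : (1 + (u:ℂ)^2) = ((1 + u^2 : ℝ) : ℂ) := by push_cast; ring
    rw [h2, Complex.ofReal_div]
    push_cast
    rw [div_mul_eq_mul_div, div_eq_div_iff oneAddSq_ne (by push_cast at h2 ⊢; rw [← h2]; exact oneAddSq_ne)]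
    ring
  rw [h, rpow_neg_two_eq hu.le]
  have hexp : Complex.exp (Complex.I * u) = Real.cos u + Real.sin u * Complex.I := by
    rw [mul_comm, Complex.exp_mul_I]
    push_cast
    ring
  rw [hexp]
  have hsplit : ((Real.cos u : ℂ) + (Real.sin u : ℂ) * Complex.I - 1 - ((u/(1+u^2) : ℝ) : ℂ) * Complex.I)
      * ((((u^2)⁻¹ : ℝ)) : ℂ)
      = (((Real.cos u - 1)*(u^2)⁻¹ : ℝ) : ℂ)
        + (((Real.sin u - u/(1+u^2))*(u^2)⁻¹ : ℝ) : ℂ) * Complex.I := by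
    push_cast
    ring
  rw [hsplit]
  simp only [Complex.add_re, Complex.ofReal_re, Complex.mul_re, Complex.I_re, Complex.I_im,
    Complex.ofReal_im, mul_zero, mul_one, zero_sub, zero_mul, sub_zero, add_zero]
  ring

lemma key_eq {t : ℝ} (ht : 0 < t) : ∀ u ∈ Ioi (0:ℝ),
    (Complex.exp (Complex.I * t * ((t⁻¹ * u : ℝ):ℂ)) - 1
        - Complex.I * t * ((t⁻¹*u:ℝ):ℂ) / (1 + ((t⁻¹*u : ℝ):ℂ)^2))
      * ((((t⁻¹*u:ℝ)) ^ (-2:ℝ) : ℝ) : ℂ)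
    = ((t^2:ℝ):ℂ) * (F1 u + Complex.I * ((u/(t^2+u^2) - u/(1+u^2) : ℝ) : ℂ)) := by
  intro u hu
  have hu0 : (0:ℝ) < u := hu
  have hx : (0:ℝ) < t⁻¹ * u := by positivity
  have ht0 : (t:ℂ) ≠ 0 := by exact_mod_cast ht.ne'
  have hu0' : (u:ℂ) ≠ 0 := by exact_mod_cast hu0.ne'
  have harg : Complex.I * t * ((t⁻¹*u : ℝ):ℂ) = Complex.I * u := by
    push_cast
    field_simp
  have hsum : ((t:ℂ))^2 + (u:ℂ)^2 ≠ 0 := by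
    have : ((t:ℂ))^2 + (u:ℂ)^2 = ((t^2+u^2 : ℝ):ℂ) := by push_cast; ring
    rw [this]
    exact_mod_cast (show t^2+u^2 ≠ 0 by positivity)
  have h1u : (1 + (u:ℂ)^2) ≠ 0 := oneAddSq_ne
  have hden : (1 + ((t⁻¹*u : ℝ):ℂ)^2) ≠ 0 := by
    have : (1 + ((t⁻¹*u : ℝ):ℂ)^2) = (((t:ℂ))^2 + (u:ℂ)^2)/((t:ℂ))^2 := by
      push_cast
      field_simp
    rw [this]
    exact div_ne_zero hsum (pow_ne_zero _ ht0)
  rw [harg, rpow_neg_two_eq hx.le]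
  unfold F1
  rw [rpow_neg_two_eq hu0.le]
  push_cast
  field_simp
  ring

theorem integral_levy_kernel_alpha_eq_one :
    ∃ c : ℝ, ∀ t : ℝ, 0 < t →
      (∫ x in Ioi (0 : ℝ),
          (Complex.exp (Complex.I * t * x) - 1 - Complex.I * t * x / (1 + (x : ℂ) ^ 2))
            * ((x ^ (-2 : ℝ) : ℝ) : ℂ))
        = Complex.I * c * t - (Real.pi / 2 : ℝ) * t
            - Complex.I * t * ((Real.log t : ℝ) : ℂ) := by
  set J : ℂ := ∫ x in Ioi (0:ℝ), F1 x with hJdef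
  have hre : J.re = -(π/2) := by
    have h0 := integral_re integrableOn_F1
    simp only [RCLike.re_to_complex] at h0
    rw [hJdef, ← h0]
    rw [setIntegral_congr_fun measurableSet_Ioi (fun u hu => F1_re hu),
      integral_neg, integral_one_sub_cos_div_sq]
  refine ⟨J.im, fun t ht => ?_⟩
  have ht0 : (t:ℂ) ≠ 0 := by exact_mod_cast ht.ne'
  set g : ℝ → ℂ := fun x =>
    (Complex.exp (Complex.I * t * x) - 1 - Complex.I * t * x / (1 + (x : ℂ) ^ 2))
      * ((x ^ (-2 : ℝ) : ℝ) : ℂ) with hg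
  have hsub := integral_comp_mul_left_Ioi g 0 (inv_pos.mpr ht)
  rw [mul_zero, inv_inv] at hsub
  have hmain : (∫ x in Ioi (0:ℝ), g x) = t⁻¹ • ∫ u in Ioi (0:ℝ), g (t⁻¹ * u) := by
    rw [hsub, smul_smul, inv_mul_cancel₀ ht.ne', one_smul]
  have hcong : (∫ u in Ioi (0:ℝ), g (t⁻¹ * u))
      = ∫ u in Ioi (0:ℝ), ((t^2:ℝ):ℂ)
          * (F1 u + Complex.I * ((u/(t^2+u^2) - u/(1+u^2) : ℝ) : ℂ)) :=
    setIntegral_congr_fun measurableSet_Ioi (fun u hu => key_eq ht u hu)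
  have hintH : Integrable (fun u => Complex.I * ((u/(t^2+u^2) - u/(1+u^2) : ℝ) : ℂ))
      (volume.restrict (Ioi (0:ℝ))) :=
    ((integrableOn_h ht).ofReal).const_mul Complex.I
  have hsplit : (∫ u in Ioi (0:ℝ),
        ((t^2:ℝ):ℂ) * (F1 u + Complex.I * ((u/(t^2+u^2) - u/(1+u^2) : ℝ) : ℂ)))
      = ((t^2:ℝ):ℂ) * (J + Complex.I * ((- Real.log t : ℝ) : ℂ)) := by
    rw [integral_const_mul, integral_add integrableOn_F1 hintH, integral_const_mul,
      show (∫ a in Ioi (0:ℝ), ((a/(t^2+a^2) - a/(1+a^2) :ℝ):ℂ))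
        = ((∫ a in Ioi (0:ℝ), (a/(t^2+a^2) - a/(1+a^2)) :ℝ):ℂ) from integral_ofReal,
      integral_h ht]
  rw [hg] at hmain
  rw [hmain, hcong, hsplit]
  have hJ : J = ((J.re : ℝ):ℂ) + ((J.im : ℝ):ℂ) * Complex.I := (Complex.re_add_im J).symm
  rw [hJ, hre, Complex.real_smul]
  simp only [Complex.add_im, Complex.mul_im, Complex.ofReal_re, Complex.ofReal_im, Complex.I_re,
    Complex.I_im, mul_zero, mul_one, zero_add, add_zero, sub_zero, zero_mul]
  push_cast
  field_simp
  ring
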